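/- Let the vertex set V = [n] be partitioned into stubborn agents V_s (with common stubbornness θ ∈ (0,1)) and non-stubborn agents V_r (stubbornness 0). Let A be the 0-1 adjacency matrix of an undirected graph, D its degree matrix, and M = (I-Θ)^{-1}Θ D + D - A. Assume each non-stubborn agent is connected to at least one stubborn agent, and every stubborn agent has positive degree. Then the minimum eigenvalue of the symmetric matrix M satisfies λ_min(M) ≥ θ d_min^s d_min^{rs} / (d_min^s + (1-θ) d_min^{rs}), where d_min^s is the minimum degree among stubborn agents and d_min^{rs} is the minimum number of stubborn neighbors among non-stubborn agents. -/

import Mathlib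

open Matrix

lemma quad_eigen_lb {n : ℕ} (B : Matrix (Fin n) (Fin n) ℝ) (hB : B.IsHermitian) (c : ℝ)
    (h : ∀ x : Fin n → ℝ, c * (x ⬝ᵥ x) ≤ x ⬝ᵥ (B *ᵥ x)) : ∀ k, c ≤ hB.eigenvalues k := by
  intro k
  set v : Fin n → ℝ := ⇑(hB.eigenvectorBasis k) with hv
  have hmv : B *ᵥ v = hB.eigenvalues k • v := hB.mulVec_eigenvectorBasis k
  have hnorm : v ⬝ᵥ v = 1 := by
    have h1 : ‖hB.eigenvectorBasis k‖ = 1 := hB.eigenvectorBasis.orthonormal.1 k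
    have h2 : (inner ℝ (hB.eigenvectorBasis k) (hB.eigenvectorBasis k) : ℝ) = 1 := by
      rw [real_inner_self_eq_norm_sq, h1]; norm_num
    rw [← h2, EuclideanSpace.inner_eq_star_dotProduct]
    simp [dotProduct]
    rfl
  have h3 := h v
  rw [hmv, hnorm, dotProduct_smul, hnorm] at h3
  simpa using h3

/-- Lower bound on the minimum eigenvalue of
`M = (I-Θ)⁻¹Θ D + D - A` when stubborn agents (set `S`, stubbornness `θ ∈ (0,1)`)
coexist with non-stubborn agents (`Sᶜ`), each non-stubborn agent being connected to
at least one stubborn agent and every stubborn agent having positive degree. -/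
theorem stmt_2 (n : ℕ) (S : Finset (Fin n)) (hS : S.Nonempty) (hSc : Sᶜ.Nonempty)
    (θ : ℝ) (hθ : θ ∈ Set.Ioo (0:ℝ) 1)
    (A : Matrix (Fin n) (Fin n) ℝ) (hA01 : ∀ i j, A i j = 0 ∨ A i j = 1)
    (hAsymm : A.IsSymm) (hAdiag : ∀ i, A i i = 0)
    (d : Fin n → ℝ) (hd : ∀ i, d i = ∑ j, A i j)
    (hconn : ∀ i ∈ Sᶜ, ∃ j ∈ S, A i j = 1)
    (hdeg : ∀ i ∈ S, 0 < d i)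
    (M : Matrix (Fin n) (Fin n) ℝ)
    (hM : M = Matrix.diagonal (fun i => if i ∈ S then θ / (1 - θ) else 0) *
      Matrix.diagonal d + Matrix.diagonal d - A) :
    ∃ hherm : M.IsHermitian,
      ∀ k, θ * (S.inf' hS d) * (Sᶜ.inf' hSc fun i => ∑ j ∈ S, A i j) /
          (S.inf' hS d + (1 - θ) * (Sᶜ.inf' hSc fun i => ∑ j ∈ S, A i j)) ≤
        hherm.eigenvalues k := by
  obtain ⟨hθ0, hθ1⟩ := hθ
  have h1θ : 0 < 1 - θ := by linarith
  have hA0 : ∀ i j, 0 ≤ A i j := by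
    intro i j; rcases hA01 i j with h | h <;> rw [h] <;> norm_num
  have hAs : ∀ i j, A j i = A i j := by
    intro i j; conv_rhs => rw [← hAsymm]
    rfl
  -- Hermitian
  have hMsymm : M.IsHermitian := by
    have hAh : A.IsHermitian := by
      rw [Matrix.IsHermitian, Matrix.conjTranspose_eq_transpose_of_trivial]
      exact hAsymm
    rw [hM, Matrix.diagonal_mul_diagonal, Matrix.diagonal_add]
    exact (Matrix.isHermitian_diagonal _).sub hAh
  set a := S.inf' hS d with ha_def
  set b := Sᶜ.inf' hSc (fun i => ∑ j ∈ S, A i j) with hb_def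
  have ha : 0 < a := (Finset.lt_inf'_iff hS).mpr hdeg
  have hb : 1 ≤ b := by
    apply Finset.le_inf'
    intro i hi
    obtain ⟨j, hj, hj1⟩ := hconn i hi
    calc (1:ℝ) = A i j := hj1.symm
      _ ≤ ∑ j ∈ S, A i j := Finset.single_le_sum (fun k _ => hA0 i k) hj
  have hbpos : 0 < b := lt_of_lt_of_le one_pos hb
  set c := θ * a * b / (a + (1 - θ) * b) with hc_def
  set q := (a + (1 - θ) * b) / ((1 - θ) * (a + b)) with hq_def
  have hden1 : 0 < a + (1 - θ) * b := by nlinarith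
  have hden2 : 0 < (1 - θ) * (a + b) := by nlinarith
  have hq1 : 1 ≤ q := by
    rw [le_div_iff₀ hden2]; nlinarith
  have hqpos : 0 < q := lt_of_lt_of_le one_pos hq1
  refine ⟨hMsymm, quad_eigen_lb M hMsymm c ?_⟩
  intro x
  -- weights
  set w : Fin n → ℝ := fun i => if i ∈ S then 1 else q with hw_def
  have hwpos : ∀ i, 0 < w i := by
    intro i; simp only [hw_def]; split <;> [norm_num; exact hqpos]
  have hwle : ∀ i, w i ≤ q := by
    intro i; simp only [hw_def]; split <;> [exact hq1; exact le_rfl]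
  -- diagonal function
  set g : Fin n → ℝ := fun i => (if i ∈ S then θ / (1 - θ) else 0) * d i + d i with hg_def
  have hMe : M = Matrix.diagonal g - A := by
    rw [hM, Matrix.diagonal_mul_diagonal, Matrix.diagonal_add]
  have hd0 : ∀ i, 0 ≤ d i := by
    intro i; rw [hd i]; exact Finset.sum_nonneg fun j _ => hA0 i j
  -- key per-index inequality
  have key : ∀ i, c * w i ≤ g i * w i - ∑ j, A i j * w j := by
    intro i
    by_cases hi : i ∈ S
    · have hdi : a ≤ d i := Finset.inf'_le d hi
      have hwi : w i = 1 := by simp [hw_def, hi]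
      have hT : ∑ j, A i j * w j ≤ d i * q := by
        calc ∑ j, A i j * w j ≤ ∑ j, A i j * q :=
              Finset.sum_le_sum fun j _ => mul_le_mul_of_nonneg_left (hwle j) (hA0 i j)
          _ = d i * q := by rw [hd i, Finset.sum_mul]
      have hgi : g i = (θ / (1 - θ)) * d i + d i := by simp [hg_def, hi]
      have e1 : θ / (1 - θ) + 1 - q = θ * b / ((1 - θ) * (a + b)) := by
        rw [hq_def]; field_simp; ring
      have e2 : c ≤ a * (θ * b / ((1 - θ) * (a + b))) := by
        rw [hc_def, mul_div_assoc']
        rw [div_le_div_iff₀ hden1 hden2]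
        nlinarith [mul_pos (mul_pos (mul_pos hθ0 hθ0) (mul_pos ha ha)) hbpos]
      have e3 : a * (θ * b / ((1 - θ) * (a + b))) ≤ d i * (θ / (1 - θ) + 1 - q) := by
        rw [e1]
        apply mul_le_mul_of_nonneg_right hdi
        positivity
      calc c * w i = c := by rw [hwi, mul_one]
        _ ≤ d i * (θ / (1 - θ) + 1 - q) := le_trans e2 e3
        _ = ((θ / (1 - θ)) * d i + d i) * 1 - d i * q := by ring
        _ ≤ g i * w i - ∑ j, A i j * w j := by rw [hgi, hwi]; linarith
    · have hi' : i ∈ Sᶜ := Finset.mem_compl.mpr hi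
      have hsi : b ≤ ∑ j ∈ S, A i j := Finset.inf'_le _ hi'
      have hwi : w i = q := by simp [hw_def, hi]
      have hgi : g i = d i := by simp [hg_def, hi]
      have hT : ∑ j, A i j * w j = (∑ j ∈ S, A i j) + q * (d i - ∑ j ∈ S, A i j) := by
        rw [← Finset.sum_add_sum_compl S (fun j => A i j * w j)]
        have hS1 : ∑ j ∈ S, A i j * w j = ∑ j ∈ S, A i j := by
          apply Finset.sum_congr rfl; intro j hj; simp [hw_def, hj]
        have hS2 : ∑ j ∈ Sᶜ, A i j * w j = q * ∑ j ∈ Sᶜ, A i j := by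
          rw [Finset.mul_sum]; apply Finset.sum_congr rfl
          intro j hj
          simp only [hw_def, Finset.mem_compl.mp hj, if_false]; ring
        have hS3 : ∑ j ∈ Sᶜ, A i j = d i - ∑ j ∈ S, A i j := by
          have := Finset.sum_add_sum_compl S (fun j => A i j)
          rw [← hd i] at this; linarith
        rw [hS1, hS2, hS3]
      have e3 : b * (q - 1) = c * q := by
        rw [hc_def, hq_def]; field_simp; ring
      have e4 : b * (q - 1) ≤ (∑ j ∈ S, A i j) * (q - 1) :=
        mul_le_mul_of_nonneg_right hsi (by linarith)
      rw [hwi, hgi, hT]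
      nlinarith
  -- quadratic form manipulation
  have pair : ∀ i j, A i j * (x i * x j) ≤
      A i j * (((x i)^2 * w j / w i + (x j)^2 * w i / w j) / 2) := by
    intro i j
    have hwi := hwpos i; have hwj := hwpos j
    have hineq : x i * x j ≤ ((x i)^2 * w j / w i + (x j)^2 * w i / w j) / 2 := by
      rw [le_div_iff₀ (by norm_num : (0:ℝ) < 2),
        div_add_div _ _ (ne_of_gt hwi) (ne_of_gt hwj),
        le_div_iff₀ (by positivity)]
      nlinarith [sq_nonneg (x i * w j - x j * w i)]
    exact mul_le_mul_of_nonneg_left hineq (hA0 i j)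
  have swap : ∑ i, ∑ j, A i j * ((x j)^2 * w i / w j) =
      ∑ i, ∑ j, A i j * ((x i)^2 * w j / w i) := by
    rw [Finset.sum_comm]
    apply Finset.sum_congr rfl; intro i _
    apply Finset.sum_congr rfl; intro j _
    rw [hAs i j]
  have cross : ∑ i, ∑ j, A i j * (x i * x j) ≤
      ∑ i, ((x i)^2 / w i) * ∑ j, A i j * w j := by
    calc ∑ i, ∑ j, A i j * (x i * x j)
        ≤ ∑ i, ∑ j, A i j * (((x i)^2 * w j / w i + (x j)^2 * w i / w j) / 2) :=
          Finset.sum_le_sum fun i _ => Finset.sum_le_sum fun j _ => pair i j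
      _ = ∑ i, ((∑ j, A i j * ((x i)^2 * w j / w i))
            + ∑ j, A i j * ((x j)^2 * w i / w j)) / 2 := by
          apply Finset.sum_congr rfl; intro i _
          rw [← Finset.sum_add_distrib, Finset.sum_div]
          apply Finset.sum_congr rfl; intro j _
          ring
      _ = (∑ i, ∑ j, A i j * ((x i)^2 * w j / w i)
            + ∑ i, ∑ j, A i j * ((x j)^2 * w i / w j)) / 2 := by
          rw [← Finset.sum_add_distrib, Finset.sum_div]
      _ = ∑ i, ∑ j, A i j * ((x i)^2 * w j / w i) := by rw [swap]; ring
      _ = ∑ i, ((x i)^2 / w i) * ∑ j, A i j * w j := by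
          apply Finset.sum_congr rfl; intro i _
          rw [Finset.mul_sum]
          apply Finset.sum_congr rfl; intro j _
          ring
  have hquad : x ⬝ᵥ (M *ᵥ x) =
      (∑ i, g i * (x i)^2) - ∑ i, ∑ j, A i j * (x i * x j) := by
    rw [hMe, Matrix.sub_mulVec, dotProduct_sub]
    congr 1
    · simp only [dotProduct, Matrix.mulVec_diagonal]
      apply Finset.sum_congr rfl; intro i _
      ring
    · simp only [dotProduct, Matrix.mulVec]
      apply Finset.sum_congr rfl; intro i _
      rw [Finset.mul_sum]
      apply Finset.sum_congr rfl; intro j _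
      ring
  rw [hquad]
  have final : ∑ i, g i * (x i)^2 - ∑ i, ((x i)^2 / w i) * ∑ j, A i j * w j ≥
      c * (x ⬝ᵥ x) := by
    have : ∑ i, g i * (x i)^2 - ∑ i, ((x i)^2 / w i) * ∑ j, A i j * w j =
        ∑ i, ((x i)^2 / w i) * (g i * w i - ∑ j, A i j * w j) := by
      rw [← Finset.sum_sub_distrib]
      apply Finset.sum_congr rfl; intro i _
      have h1 : (x i)^2 / w i * w i = (x i)^2 := div_mul_cancel₀ _ (hwpos i).ne'
      linear_combination (-(g i)) * h1
    rw [this]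
    have step : ∀ i, c * (x i)^2 ≤ ((x i)^2 / w i) * (g i * w i - ∑ j, A i j * w j) := by
      intro i
      have hwi := hwpos i
      have h1 : (x i)^2 / w i * w i = (x i)^2 := div_mul_cancel₀ _ (hwpos i).ne'
      calc c * (x i)^2 = ((x i)^2 / w i) * (c * w i) := by linear_combination (-c) * h1
        _ ≤ ((x i)^2 / w i) * (g i * w i - ∑ j, A i j * w j) := by
            apply mul_le_mul_of_nonneg_left (key i) (by positivity)
    calc c * (x ⬝ᵥ x) = ∑ i, c * (x i)^2 := by
          simp [dotProduct, Finset.mul_sum, sq]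
      _ ≤ _ := Finset.sum_le_sum fun i _ => step i
  linarith [cross, final]
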